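/- Suppose n ≥ 1, n·p_l < k ≤ n·ε, and p_l^k (1−p_l)^(n−k) ≥ ε^k (1−ε)^(n−k), and let ε < p ≤ 1. Then the infimum, over all feasible priors μ, of the posterior confidence P(μ,p) equals θ·f(ε) / (θ·f(ε) + (1−θ)·f(p)). -/

import Mathlib

open MeasureTheory Set

/-- The Bernoulli likelihood of observing `k` failures in `n` trials. -/
noncomputable def likelihood (k n : ℕ) (x : ℝ) : ℝ := x ^ k * (1 - x) ^ (n - k)

/-- A prior (probability measure on `[0,1]`) is feasible if it assigns mass `θ`
to `[0, ε]` and full mass to `[p_l, 1]`. -/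
def Feasible (pl ε θ : ℝ) (μ : Measure ℝ) : Prop :=
  IsProbabilityMeasure μ ∧ μ (Icc 0 ε) = ENNReal.ofReal θ ∧ μ (Icc pl 1) = 1

/-- The posterior confidence `P(μ, p)` in the bound `p` after observing
`k` failures in `n` miles, with prior `μ`. -/
noncomputable def posterior (k n : ℕ) (μ : Measure ℝ) (p : ℝ) : ℝ :=
  (∫ x in Icc (0 : ℝ) p, likelihood k n x ∂μ) /
    (∫ x in Icc (0 : ℝ) 1, likelihood k n x ∂μ)

lemma lik_cont (k n : ℕ) : Continuous (likelihood k n) := by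
  unfold likelihood; fun_prop

lemma lik_nonneg (k n : ℕ) {x : ℝ} (h0 : 0 ≤ x) (h1 : x ≤ 1) : 0 ≤ likelihood k n x :=
  mul_nonneg (pow_nonneg h0 _) (pow_nonneg (by linarith) _)

lemma lik_hasDeriv (a b : ℕ) (x : ℝ) :
    HasDerivAt (fun x : ℝ => x ^ (a+1) * (1-x) ^ (b+1))
      (x ^ a * (1-x) ^ b * (((a:ℝ)+1) - ((a:ℝ)+(b:ℝ)+2) * x)) x := by
  have h1 : HasDerivAt (fun x : ℝ => x ^ (a+1)) (((a:ℝ)+1) * x ^ a) x := by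
    simpa using hasDerivAt_pow (a+1) x
  have h3 : HasDerivAt (fun x : ℝ => 1 - x) (-1) x := by
    simpa using (hasDerivAt_id x).const_sub (1:ℝ)
  have h2 : HasDerivAt (fun x : ℝ => (1-x) ^ (b+1)) (-(((b:ℝ)+1) * (1-x) ^ b)) x := by
    have := (hasDerivAt_pow (b+1) (1-x)).comp x h3
    simp at this; exact this
  have := h1.fun_mul h2
  refine this.congr_deriv ?_
  push_cast
  ring

lemma lik_anti (a b : ℕ) : AntitoneOn (fun x : ℝ => x ^ (a+1) * (1-x) ^ (b+1))
    (Icc (((a:ℝ)+1)/((a:ℝ)+(b:ℝ)+2)) 1) := by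
  have hN : (0:ℝ) < (a:ℝ)+(b:ℝ)+2 := by positivity
  have hc0 : (0:ℝ) < ((a:ℝ)+1)/((a:ℝ)+(b:ℝ)+2) := by positivity
  apply antitoneOn_of_deriv_nonpos (convex_Icc _ _)
  · exact (by fun_prop : Continuous fun x : ℝ => x ^ (a+1) * (1-x) ^ (b+1)).continuousOn
  · exact fun x _ => (lik_hasDeriv a b x).differentiableAt.differentiableWithinAt
  · intro x hx
    rw [interior_Icc] at hx
    rw [(lik_hasDeriv a b x).deriv]
    have hx1 : ((a:ℝ)+1)/((a:ℝ)+(b:ℝ)+2) < x := hx.1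
    have hx2 : x < 1 := hx.2
    have hfac : ((a:ℝ)+1) - ((a:ℝ)+(b:ℝ)+2) * x < 0 := by
      rw [div_lt_iff₀ hN] at hx1; linarith
    have hpos : 0 ≤ x ^ a * (1-x) ^ b :=
      mul_nonneg (pow_nonneg (le_of_lt (hc0.trans hx1)) _) (pow_nonneg (by linarith) _)
    nlinarith

lemma lik_mono (a b : ℕ) : MonotoneOn (fun x : ℝ => x ^ (a+1) * (1-x) ^ (b+1))
    (Icc (0:ℝ) (((a:ℝ)+1)/((a:ℝ)+(b:ℝ)+2))) := by
  have hN : (0:ℝ) < (a:ℝ)+(b:ℝ)+2 := by positivity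
  have hc1 : ((a:ℝ)+1)/((a:ℝ)+(b:ℝ)+2) < 1 := by
    rw [div_lt_one hN]; linarith [Nat.cast_nonneg (α := ℝ) b]
  apply monotoneOn_of_deriv_nonneg (convex_Icc _ _)
  · exact (by fun_prop : Continuous fun x : ℝ => x ^ (a+1) * (1-x) ^ (b+1)).continuousOn
  · exact fun x _ => (lik_hasDeriv a b x).differentiableAt.differentiableWithinAt
  · intro x hx
    rw [interior_Icc] at hx
    rw [(lik_hasDeriv a b x).deriv]
    have hx1 : 0 < x := hx.1
    have hx2 : x < ((a:ℝ)+1)/((a:ℝ)+(b:ℝ)+2) := hx.2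
    have hfac : 0 ≤ ((a:ℝ)+1) - ((a:ℝ)+(b:ℝ)+2) * x := by
      rw [lt_div_iff₀ hN] at hx2; linarith
    have hpos : 0 ≤ x ^ a * (1-x) ^ b :=
      mul_nonneg (pow_nonneg hx1.le _) (pow_nonneg (by linarith [hx2.trans hc1]) _)
    positivity

lemma integrable_dirac'' (g : ℝ → ℝ) (hg : Measurable g) (x : ℝ) :
    Integrable g (Measure.dirac x) := by
  refine ⟨hg.aestronglyMeasurable, ?_⟩
  rw [hasFiniteIntegral_iff_norm, lintegral_dirac' _ (by fun_prop)]
  exact ENNReal.ofReal_lt_top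

open Classical in
lemma mix_integral (c d : ℝ) (hc : 0 ≤ c) (hd : 0 ≤ d) (x y : ℝ) (g : ℝ → ℝ)
    (hg : Measurable g) (s : Set ℝ) (hs : MeasurableSet s) :
    ∫ t in s, g t ∂(ENNReal.ofReal c • Measure.dirac x + ENNReal.ofReal d • Measure.dirac y) =
      (if x ∈ s then c * g x else 0) + (if y ∈ s then d * g y else 0) := by
  classical
  have key : ∀ (e : ℝ), 0 ≤ e → ∀ z : ℝ,
      ∫ t, g t ∂(ENNReal.ofReal e • Measure.dirac z) = e * g z := by
    intro e he z
    rw [integral_smul_measure, integral_dirac, ENNReal.toReal_ofReal he, smul_eq_mul]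
  rw [Measure.restrict_add, Measure.restrict_smul, Measure.restrict_smul,
      restrict_dirac' hs, restrict_dirac' hs]
  split_ifs with h1 h2 h2
  · rw [integral_add_measure ((integrable_dirac'' g hg x).smul_measure ENNReal.ofReal_ne_top)
      ((integrable_dirac'' g hg y).smul_measure ENNReal.ofReal_ne_top), key c hc x, key d hd y]
  · rw [smul_zero, add_zero, key c hc x, add_zero]
  · rw [smul_zero, zero_add, key d hd y, zero_add]
  · rw [smul_zero, smul_zero, add_zero, integral_zero_measure, add_zero]

set_option maxHeartbeats 1000000 in
theorem stmt_3 (k n : ℕ) (hkn : k ≤ n) (hn : 1 ≤ n) (pl ε θ p : ℝ)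
    (hpl : 0 < pl) (hple : pl < ε) (hε1 : ε < 1)
    (hθ0 : 0 < θ) (hθ1 : θ ≤ 1)
    (hk1 : (n : ℝ) * pl < k) (hk2 : (k : ℝ) ≤ n * ε)
    (hlik : ε ^ k * (1 - ε) ^ (n - k) ≤ pl ^ k * (1 - pl) ^ (n - k))
    (hεp : ε < p) (hp1 : p ≤ 1) :
    sInf {y : ℝ | ∃ μ : Measure ℝ, Feasible pl ε θ μ ∧ posterior k n μ p = y} =
      θ * likelihood k n ε /
        (θ * likelihood k n ε + (1 - θ) * likelihood k n p) := by
  classical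
  have hε0 : 0 < ε := hpl.trans hple
  have hp0 : 0 < p := hε0.trans hεp
  have hn0 : (0:ℝ) < n := by exact_mod_cast hn
  -- k is at least 1 and strictly less than n
  have hk_pos : 0 < k := by
    have h : (0:ℝ) < (k:ℝ) := lt_trans (by positivity) hk1
    exact_mod_cast h
  have hk_lt : k < n := by
    have : (k:ℝ) < n := by nlinarith
    exact_mod_cast this
  obtain ⟨a, ha⟩ : ∃ a, k = a + 1 := ⟨k - 1, (Nat.succ_pred_eq_of_pos hk_pos).symm⟩
  obtain ⟨b, hb⟩ : ∃ b, n - k = b + 1 := ⟨n - k - 1, (Nat.succ_pred_eq_of_pos (by omega)).symm⟩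
  have hacast : ((a:ℝ)+1) = (k:ℝ) := by exact_mod_cast congrArg (Nat.cast : ℕ → ℝ) ha.symm
  have hNcast : ((a:ℝ)+(b:ℝ)+2) = (n:ℝ) := by
    have : n = a + b + 2 := by omega
    rw [this]; push_cast; ring
  have hf : likelihood k n = fun x : ℝ => x ^ (a+1) * (1-x) ^ (b+1) := by
    funext x; simp only [likelihood]; rw [hb, ha]
  set f := likelihood k n with hfdef
  have hanti : AntitoneOn f (Icc ((k:ℝ)/n) 1) := by
    have := lik_anti a b
    rw [hacast, hNcast] at this
    rw [hf]; exact this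
  have hmono : MonotoneOn f (Icc (0:ℝ) ((k:ℝ)/n)) := by
    have := lik_mono a b
    rw [hacast, hNcast] at this
    rw [hf]; exact this
  have hc_lb : pl < (k:ℝ)/n := by rw [lt_div_iff₀ hn0]; linarith
  have hc_ub : (k:ℝ)/n ≤ ε := by rw [div_le_iff₀ hn0]; linarith
  -- key pointwise inequalities
  have hfε_pos : 0 < f ε := by
    rw [hf]
    have : (0:ℝ) < 1 - ε := by linarith
    positivity
  have hfp0 : 0 ≤ f p := lik_nonneg k n hp0.le hp1
  have h_ge : ∀ x ∈ Icc pl ε, f ε ≤ f x := by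
    intro x hx
    by_cases hxc : x ≤ (k:ℝ)/n
    · have h1 : f pl ≤ f x :=
        hmono ⟨hpl.le, hc_lb.le⟩ ⟨by linarith [hx.1], hxc⟩ hx.1
      have h2 : f ε ≤ f pl := by
        show likelihood k n ε ≤ likelihood k n pl
        simp only [likelihood]; exact hlik
      linarith
    · push_neg at hxc
      exact hanti ⟨hxc.le, by linarith [hx.2]⟩ ⟨hc_ub, hε1.le⟩ hx.2
  have h_le : ∀ x ∈ Icc p 1, f x ≤ f p := fun x hx =>
    hanti ⟨by linarith, hp1⟩ ⟨by linarith [hx.1], hx.2⟩ hx.1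
  set L := θ * f ε / (θ * f ε + (1 - θ) * f p) with hL
  have hden_pos : 0 < θ * f ε + (1 - θ) * f p := by
    have h1 : 0 < θ * f ε := mul_pos hθ0 hfε_pos
    nlinarith
  set S := {y : ℝ | ∃ μ : Measure ℝ, Feasible pl ε θ μ ∧ posterior k n μ p = y} with hS
  -- The lower bound
  have hLB : ∀ y ∈ S, L ≤ y := by
    rintro y ⟨μ, ⟨hprob, hμε, hμpl⟩, rfl⟩
    haveI := hprob
    have hI : IntegrableOn f (Icc (0:ℝ) 1) μ := (lik_cont k n).integrableOn_Icc
    have hsub_p : Icc (0:ℝ) p ⊆ Icc (0:ℝ) 1 := Icc_subset_Icc le_rfl hp1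
    have hsub_ε : Icc (0:ℝ) ε ⊆ Icc (0:ℝ) 1 := Icc_subset_Icc le_rfl (by linarith)
    have hsub_plε : Icc pl ε ⊆ Icc (0:ℝ) 1 := Icc_subset_Icc hpl.le (by linarith)
    have hsub_εp : Ioc ε p ⊆ Icc (0:ℝ) 1 := fun x hx => ⟨by linarith [hx.1], hx.2.trans hp1⟩
    have hsub_p1 : Ioc p 1 ⊆ Icc (0:ℝ) 1 := fun x hx => ⟨by linarith [hx.1], hx.2⟩
    -- split [0,1] = [0,p] ∪ (p,1]
    have hT : ∫ x in Icc (0:ℝ) 1, f x ∂μ =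
        (∫ x in Icc (0:ℝ) p, f x ∂μ) + ∫ x in Ioc p 1, f x ∂μ := by
      rw [← Icc_union_Ioc_eq_Icc (le_of_lt hp0) hp1]
      exact setIntegral_union
        (disjoint_left.mpr (fun x hx hx' => absurd hx.2 (not_le.mpr hx'.1)))
        measurableSet_Ioc (hI.mono_set hsub_p) (hI.mono_set hsub_p1)
    -- [0,p] = [0,ε] ∪ (ε,p]
    have hA : ∫ x in Icc (0:ℝ) p, f x ∂μ =
        (∫ x in Icc (0:ℝ) ε, f x ∂μ) + ∫ x in Ioc ε p, f x ∂μ := by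
      rw [← Icc_union_Ioc_eq_Icc (le_of_lt hε0) hεp.le]
      exact setIntegral_union
        (disjoint_left.mpr (fun x hx hx' => absurd hx.2 (not_le.mpr hx'.1)))
        measurableSet_Ioc (hI.mono_set hsub_ε) (hI.mono_set hsub_εp)
    -- a.e. equality of [0,ε] and [pl,ε]
    have hnull : μ (Iio pl) = 0 := by
      have hcompl : μ (Icc pl 1)ᶜ = 0 := by
        rw [measure_compl measurableSet_Icc (measure_ne_top μ _), hμpl, measure_univ]
        simp
      refine measure_mono_null ?_ hcompl
      intro x hx
      simp only [mem_compl_iff, mem_Icc, not_and, not_le]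
      intro h
      exact absurd h (not_le.mpr hx)
    have hae : Icc (0:ℝ) ε =ᵐ[μ] Icc pl ε := by
      rw [ae_eq_set]
      constructor
      · refine measure_mono_null ?_ hnull
        intro x ⟨hx1, hx2⟩
        simp only [mem_Icc, not_and, not_le] at hx2
        by_contra hxpl
        simp only [mem_Iio, not_lt] at hxpl
        exact absurd hx1.2 (not_le.mpr (hx2 hxpl))
      · rw [diff_eq_empty.mpr (Icc_subset_Icc hpl.le le_rfl)]
        exact measure_empty
    have hμplε : μ (Icc pl ε) = ENNReal.ofReal θ := by
      rw [← measure_congr hae]; exact hμε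
    -- lower bound for the numerator
    have hAε : θ * f ε ≤ ∫ x in Icc (0:ℝ) ε, f x ∂μ := by
      rw [setIntegral_congr_set hae]
      have hconst : ∫ x in Icc pl ε, f ε ∂μ ≤ ∫ x in Icc pl ε, f x ∂μ :=
        setIntegral_mono_on (integrableOn_const (measure_ne_top μ _))
          (hI.mono_set hsub_plε) measurableSet_Icc h_ge
      rwa [setIntegral_const, measureReal_def, hμplε, ENNReal.toReal_ofReal hθ0.le, smul_eq_mul] at hconst
    have hεp_nonneg : 0 ≤ ∫ x in Ioc ε p, f x ∂μ :=
      setIntegral_nonneg measurableSet_Ioc (fun x hx =>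
        lik_nonneg k n (hsub_εp hx).1 (hsub_εp hx).2)
    have hA_ge : θ * f ε ≤ ∫ x in Icc (0:ℝ) p, f x ∂μ := by
      rw [hA]; linarith
    -- upper bound for the tail
    have hC_nonneg : 0 ≤ ∫ x in Ioc p 1, f x ∂μ :=
      setIntegral_nonneg measurableSet_Ioc (fun x hx =>
        lik_nonneg k n (hsub_p1 hx).1 (hsub_p1 hx).2)
    have hC_le : ∫ x in Ioc p 1, f x ∂μ ≤ (μ (Ioc p 1)).toReal * f p := by
      have hconst : ∫ x in Ioc p 1, f x ∂μ ≤ ∫ x in Ioc p 1, f p ∂μ :=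
        setIntegral_mono_on (hI.mono_set hsub_p1)
          (integrableOn_const (measure_ne_top μ _)) measurableSet_Ioc
          (fun x hx => h_le x ⟨hx.1.le, hx.2⟩)
      rwa [setIntegral_const, smul_eq_mul] at hconst
    have hμtail : (μ (Ioc p 1)).toReal ≤ 1 - θ := by
      have hdisj : Disjoint (Icc (0:ℝ) ε) (Ioc p 1) :=
        disjoint_left.mpr (fun x hx hx' => absurd hx.2 (not_le.mpr (hεp.trans hx'.1)))
      have hle1 : μ (Icc (0:ℝ) ε ∪ Ioc p 1) ≤ 1 := prob_le_one
      rw [measure_union hdisj measurableSet_Ioc, hμε] at hle1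
      have h1' : ENNReal.ofReal θ + μ (Ioc p 1) ≤
          ENNReal.ofReal θ + ENNReal.ofReal (1-θ) := by
        rw [← ENNReal.ofReal_add hθ0.le (by linarith), show θ + (1-θ) = 1 by ring,
          ENNReal.ofReal_one]
        exact hle1
      have h2' : μ (Ioc p 1) ≤ ENNReal.ofReal (1-θ) :=
        (ENNReal.add_le_add_iff_left ENNReal.ofReal_ne_top).mp h1'
      exact ENNReal.toReal_le_of_le_ofReal (by linarith) h2'
    set A := ∫ x in Icc (0:ℝ) p, f x ∂μ with hAdef
    set C := ∫ x in Ioc p 1, f x ∂μ with hCdef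
    set c := (μ (Ioc p 1)).toReal with hcdef
    clear_value A C c
    have hc0 : 0 ≤ c := by rw [hcdef]; exact ENNReal.toReal_nonneg
    have hA_pos : 0 < A := lt_of_lt_of_le (mul_pos hθ0 hfε_pos) hA_ge
    have hT_pos : 0 < (∫ x in Icc (0:ℝ) 1, f x ∂μ) := by rw [hT]; linarith
    rw [posterior, ← hfdef, hL]
    rw [div_le_div_iff₀ hden_pos hT_pos]
    rw [hT, ← hAdef]
    have h1 : θ * f ε * C ≤ θ * f ε * (c * f p) := by
      have : C ≤ c * f p := hC_le
      exact mul_le_mul_of_nonneg_left this (mul_pos hθ0 hfε_pos).le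
    have h2 : θ * f ε * (c * f p) ≤ A * ((1 - θ) * f p) :=
      mul_le_mul hA_ge (mul_le_mul_of_nonneg_right hμtail hfp0)
        (mul_nonneg hc0 hfp0) hA_pos.le
    linarith [h1, h2]
  -- the approximating mixture measures
  have hmeas : Measurable f := (lik_cont k n).measurable
  have hθ1' : (0:ℝ) ≤ 1 - θ := by linarith
  have hFeas : ∀ q : ℝ, ε < q → q ≤ 1 →
      Feasible pl ε θ (ENNReal.ofReal θ • Measure.dirac ε + ENNReal.ofReal (1-θ) • Measure.dirac q) := by
    intro q hq1 hq2
    have happ : ∀ s : Set ℝ, MeasurableSet s →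
        (ENNReal.ofReal θ • Measure.dirac ε + ENNReal.ofReal (1-θ) • Measure.dirac q) s =
        (if ε ∈ s then ENNReal.ofReal θ else 0) + (if q ∈ s then ENNReal.ofReal (1-θ) else 0) := by
      intro s hs
      rw [Measure.add_apply, Measure.smul_apply, Measure.smul_apply,
        Measure.dirac_apply' _ hs, Measure.dirac_apply' _ hs]
      by_cases h1 : ε ∈ s <;> by_cases h2 : q ∈ s <;> simp [indicator_apply, h1, h2]
    have hsum : ENNReal.ofReal θ + ENNReal.ofReal (1-θ) = 1 := by
      rw [← ENNReal.ofReal_add hθ0.le hθ1', show θ + (1-θ) = 1 by ring, ENNReal.ofReal_one]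
    refine ⟨⟨?_⟩, ?_, ?_⟩
    · rw [happ univ MeasurableSet.univ]
      simp [hsum]
    · rw [happ _ measurableSet_Icc]
      have h1 : ε ∈ Icc (0:ℝ) ε := ⟨hε0.le, le_rfl⟩
      have h2 : q ∉ Icc (0:ℝ) ε := fun h => absurd h.2 (not_le.mpr hq1)
      simp [h1, h2]
    · rw [happ _ measurableSet_Icc]
      have h1 : ε ∈ Icc pl 1 := ⟨hple.le, hε1.le⟩
      have h2 : q ∈ Icc pl 1 := ⟨by linarith, hq2⟩
      simp [h1, h2, hsum]
  have hPost : ∀ q : ℝ, ε < q → q ≤ 1 →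
      posterior k n (ENNReal.ofReal θ • Measure.dirac ε + ENNReal.ofReal (1-θ) • Measure.dirac q) p =
      (θ * f ε + (if q ≤ p then (1-θ) * f q else 0)) / (θ * f ε + (1-θ) * f q) := by
    intro q hq1 hq2
    rw [posterior, ← hfdef,
      mix_integral θ (1-θ) hθ0.le hθ1' ε q f hmeas _ measurableSet_Icc,
      mix_integral θ (1-θ) hθ0.le hθ1' ε q f hmeas _ measurableSet_Icc]
    have h1 : ε ∈ Icc (0:ℝ) p := ⟨hε0.le, hεp.le⟩
    have h2 : ε ∈ Icc (0:ℝ) 1 := ⟨hε0.le, hε1.le⟩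
    have h3 : q ∈ Icc (0:ℝ) 1 := ⟨by linarith, hq2⟩
    have h4 : q ∈ Icc (0:ℝ) p ↔ q ≤ p := by
      constructor
      · exact fun h => h.2
      · exact fun h => ⟨by linarith, h⟩
    simp only [h1, h2, h3, if_true, h4]
  have hBdd : BddBelow S := ⟨L, hLB⟩
  have hNe : S.Nonempty := by
    refine ⟨_, _, hFeas 1 hε1 le_rfl, rfl⟩
  refine le_antisymm ?_ (le_csInf hNe hLB)
  -- upper bound: sInf S ≤ L
  rcases eq_or_lt_of_le hp1 with hp_eq | hp_lt
  · -- p = 1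
    have hf1 : f 1 = 0 := by
      rw [hf]
      simp
    refine csInf_le hBdd ⟨_, hFeas 1 hε1 le_rfl, ?_⟩
    rw [hPost 1 hε1 le_rfl, hp_eq, if_pos le_rfl, hf1]
    simp only [mul_zero, add_zero]
    rw [hL, hp_eq, hf1]
    simp
  · -- p < 1 : approach along q → p⁺
    have hgc : ContinuousAt (fun q => θ * f ε / (θ * f ε + (1-θ) * f q)) p := by
      apply ContinuousAt.div continuousAt_const
      · exact (continuous_const.add (continuous_const.mul (lik_cont k n))).continuousAt
      · exact ne_of_gt hden_pos
    haveI hNB : (nhdsWithin p (Ioc p 1)).NeBot := by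
      apply mem_closure_iff_nhdsWithin_neBot.mp
      rw [closure_Ioc (ne_of_lt hp_lt)]
      exact ⟨le_rfl, hp1⟩
    have htend : Filter.Tendsto (fun q => θ * f ε / (θ * f ε + (1-θ) * f q))
        (nhdsWithin p (Ioc p 1)) (nhds L) :=
      hgc.tendsto.mono_left nhdsWithin_le_nhds
    refine ge_of_tendsto htend ?_
    filter_upwards [self_mem_nhdsWithin] with q hq
    refine csInf_le hBdd ⟨_, hFeas q (hεp.trans hq.1) hq.2, ?_⟩
    rw [hPost q (hεp.trans hq.1) hq.2, if_neg (not_le.mpr hq.1), add_zero]
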